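/- Let t be a nonzero integer and U(t) the lattice with Gram matrix [[0,t],[t,0]]. The orthogonal group O(U(t)) is isomorphic to (ℤ/2ℤ)², generated by the reflections T(e₁+e₂) and T(e₁−e₂), and the image of O(U(t)) under f = det × θ is the subgroup generated by (−1, 2t mod squares) and (−1, −2t mod squares) in {±1} × ℚ^×/(ℚ^×)². -/

import Mathlib

open Matrix

/-- The bilinear form on `ℚⁿ` associated to an integer Gram matrix `M`. -/
noncomputable def ratForm {n : ℕ} (M : Matrix (Fin n) (Fin n) ℤ)
    (x y : Fin n → ℚ) : ℚ :=
  dotProduct x ((M.map (Int.cast : ℤ → ℚ)).mulVec y)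

/-- The reflection `T(v) : w ↦ w − (2⟨v,w⟩/⟨v,v⟩)·v` on `ℚⁿ`. -/
noncomputable def ratReflection {n : ℕ} (M : Matrix (Fin n) (Fin n) ℤ)
    (v w : Fin n → ℚ) : Fin n → ℚ :=
  w - (2 * ratForm M v w / ratForm M v v) • v


lemma ratForm_apply (t : ℤ) (v w : Fin 2 → ℚ) :
    ratForm !![0, t; t, 0] v w = t * (v 0 * w 1 + v 1 * w 0) := by
  simp [ratForm, dotProduct, Matrix.mulVec, Fin.sum_univ_two, Matrix.map_apply]
  ring

lemma reflect_eq (t : ℤ) (v : Fin 2 → ℚ)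
    (hv : ratForm !![0, t; t, 0] v v ≠ 0) :
    v 0 ≠ 0 ∧ v 1 ≠ 0 ∧ ∀ w, ratReflection !![0, t; t, 0] v w =
      ![-(v 0 / v 1) * w 1, -(v 1 / v 0) * w 0] := by
  rw [ratForm_apply] at hv
  have h0 : v 0 ≠ 0 := by intro h; apply hv; rw [h]; ring
  have h1 : v 1 ≠ 0 := by intro h; apply hv; rw [h]; ring
  have ht0 : (t:ℚ) ≠ 0 := by intro h; apply hv; rw [h]; ring
  refine ⟨h0, h1, fun w => ?_⟩
  funext i
  fin_cases i <;>
  · simp [ratReflection, ratForm_apply]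
    field_simp
    ring

lemma foldr_normal_form (t : ℤ) (ht : (t:ℚ) ≠ 0) (l : List (Fin 2 → ℚ))
    (hl : ∀ v ∈ l, ratForm !![0, t; t, 0] v v ≠ 0) :
    ∃ c s : ℚ, c ≠ 0 ∧ s ≠ 0 ∧
      (l.map fun v => ratForm !![0, t; t, 0] v v).prod =
        (-(2*(t:ℚ)))^l.length * c * s^2 ∧
      ∀ w, (l.map (ratReflection !![0, t; t, 0])).foldr (· ∘ ·) id w =
        if Even l.length then ![c * w 0, c⁻¹ * w 1] else ![c * w 1, c⁻¹ * w 0] := by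
  induction l with
  | nil =>
    refine ⟨1, 1, one_ne_zero, one_ne_zero, by simp, fun w => ?_⟩
    simp only [List.map_nil, List.foldr_nil, List.length_nil, Even.zero, if_true]
    funext i; fin_cases i <;> simp
  | cons v l' ih =>
    have hv : ratForm !![0, t; t, 0] v v ≠ 0 := hl v List.mem_cons_self
    obtain ⟨h0, h1, hT⟩ := reflect_eq t v hv
    obtain ⟨c', s', hc', hs', hprod, hF⟩ := ih (fun u hu => hl u (List.mem_cons_of_mem v hu))
    refine ⟨-(v 0 / v 1) / c', v 1 * c' * s', ?_, ?_, ?_, ?_⟩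
    · exact div_ne_zero (neg_ne_zero.mpr (div_ne_zero h0 h1)) hc'
    · exact mul_ne_zero (mul_ne_zero h1 hc') hs'
    · rw [List.map_cons, List.prod_cons, hprod, ratForm_apply, List.length_cons, pow_succ]
      field_simp
      ring
    · intro w
      rw [List.map_cons, List.foldr_cons]
      have : ∀ x, (List.foldr (· ∘ ·) id (List.map (ratReflection !![0, t; t, 0]) l')) x =
          if Even l'.length then ![c' * x 0, c'⁻¹ * x 1] else ![c' * x 1, c'⁻¹ * x 0] := hF
      simp only [Function.comp_apply, this, hT]
      by_cases hn : Even l'.length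
      · rw [if_pos hn, if_neg (by simp [Nat.even_add_one, hn])]
        funext i; fin_cases i <;>
          · simp
            field_simp [h0, h1, hc']
            try ring
      · rw [if_neg hn, if_pos (by simp [Nat.even_add_one, hn])]
        funext i; fin_cases i <;>
          · simp
            field_simp [h0, h1, hc']
            try ring

lemma orth_classify (t : ℤ) (ht : t ≠ 0) (P : Matrix (Fin 2) (Fin 2) ℤ) :
    P.transpose * !![0, t; t, 0] * P = !![0, t; t, 0] ↔
    (P = 1 ∨ P = -1 ∨ P = !![0,1;1,0] ∨ P = -!![0,1;1,0]) := by
  constructor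
  · intro h
    set a := P 0 0; set b := P 0 1; set c := P 1 0; set d := P 1 1
    have hP : P = !![a, b; c, d] := Matrix.eta_fin_two P
    rw [hP] at h
    have hT : (!![a, b; c, d]).transpose = !![a, c; b, d] := by
      ext i j; fin_cases i <;> fin_cases j <;> simp [Matrix.transpose]
    rw [hT, Matrix.mul_fin_two, Matrix.mul_fin_two] at h
    have h00 : t * (a * c) * 2 = 0 := by
      have := congrFun (congrFun h 0) 0; simp at this; linarith
    have h11 : t * (b * d) * 2 = 0 := by
      have := congrFun (congrFun h 1) 1; simp at this; linarith
    have h01 : t * (a * d + b * c) = t * 1 := by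
      have := congrFun (congrFun h 0) 1; simp at this; linarith
    have hac : a * c = 0 := by
      rcases mul_eq_zero.mp ((mul_eq_zero.mp h00).resolve_right (by norm_num)) with h' | h'
      · exact absurd h' ht
      · exact h'
    have hbd : b * d = 0 := by
      rcases mul_eq_zero.mp ((mul_eq_zero.mp h11).resolve_right (by norm_num)) with h' | h'
      · exact absurd h' ht
      · exact h'
    have hadbc : a * d + b * c = 1 := mul_left_cancel₀ ht h01
    rcases mul_eq_zero.mp hac with ha | hc
    · -- a = 0, so b*c = 1
      have hbc : b * c = 1 := by rw [ha] at hadbc; linarith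
      have hd : d = 0 := by
        rcases Int.mul_eq_one_iff_eq_one_or_neg_one.mp hbc with ⟨hb, _⟩ | ⟨hb, _⟩ <;>
          [skip; skip] <;> · rw [hb] at hbd; omega
      rcases Int.mul_eq_one_iff_eq_one_or_neg_one.mp hbc with ⟨hb, hc⟩ | ⟨hb, hc⟩
      · right; right; left
        rw [hP]; ext i j; fin_cases i <;> fin_cases j <;> simp [ha, hb, hc, hd]
      · right; right; right
        rw [hP]; ext i j; fin_cases i <;> fin_cases j <;> simp [ha, hb, hc, hd]
    · -- c = 0, so a*d = 1
      have had : a * d = 1 := by rw [hc] at hadbc; linarith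
      have hb : b = 0 := by
        rcases Int.mul_eq_one_iff_eq_one_or_neg_one.mp had with ⟨_, hd⟩ | ⟨_, hd⟩ <;>
          · rw [hd] at hbd; omega
      rcases Int.mul_eq_one_iff_eq_one_or_neg_one.mp had with ⟨ha, hd⟩ | ⟨ha, hd⟩
      · left
        rw [hP]; ext i j; fin_cases i <;> fin_cases j <;> simp [ha, hb, hc, hd, Matrix.one_apply]
      · right; left
        rw [hP]; ext i j; fin_cases i <;> fin_cases j <;> simp [ha, hb, hc, hd, Matrix.one_apply]
  · rintro (rfl | rfl | rfl | rfl) <;>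
      ext i j <;> fin_cases i <;> fin_cases j <;>
      simp [Matrix.mul_apply, Fin.sum_univ_two, Matrix.one_apply, Matrix.transpose]

lemma map_intCast2 (a b c d : ℤ) :
    (!![a, b; c, d]).map (Int.cast : ℤ → ℚ) = !![(a:ℚ), b; c, d] := by
  ext i j; fin_cases i <;> fin_cases j <;> simp

lemma one_eta : (1 : Matrix (Fin 2) (Fin 2) ℤ) = !![1, 0; 0, 1] := by
  ext i j; fin_cases i <;> fin_cases j <;> simp [Matrix.one_apply]

lemma neg_one_eta : (-1 : Matrix (Fin 2) (Fin 2) ℤ) = !![-1, 0; 0, -1] := by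
  rw [one_eta]; ext i j; fin_cases i <;> fin_cases j <;> simp

lemma neg_S_eta : (-(!![0,1;1,0]) : Matrix (Fin 2) (Fin 2) ℤ) = !![0, -1; -1, 0] := by
  ext i j; fin_cases i <;> fin_cases j <;> simp

lemma mulVec_explicit (a b c d : ℚ) (w : Fin 2 → ℚ) :
    (!![a, b; c, d]).mulVec w = ![a * w 0 + b * w 1, c * w 0 + d * w 1] := by
  funext i; fin_cases i <;> simp [Matrix.mulVec, dotProduct, Fin.sum_univ_two]

lemma reflS_eq (t : ℤ) (ht : (t:ℚ) ≠ 0) (w : Fin 2 → ℚ) :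
    ((!![0,1;1,0] : Matrix (Fin 2) (Fin 2) ℤ).map (Int.cast : ℤ → ℚ)).mulVec w =
      ratReflection !![0, t; t, 0] ![1, -1] w := by
  rw [map_intCast2, mulVec_explicit]
  funext i; fin_cases i <;>
  · simp [ratReflection, ratForm_apply]
    field_simp
    ring

lemma reflnegS_eq (t : ℤ) (ht : (t:ℚ) ≠ 0) (w : Fin 2 → ℚ) :
    (((-(!![0,1;1,0])) : Matrix (Fin 2) (Fin 2) ℤ).map (Int.cast : ℤ → ℚ)).mulVec w =
      ratReflection !![0, t; t, 0] ![1, 1] w := by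
  rw [neg_S_eta, map_intCast2, mulVec_explicit]
  funext i; fin_cases i <;>
  · simp [ratReflection, ratForm_apply]
    field_simp
    ring

lemma orth_sq_eq_one (t : ℤ) (ht : t ≠ 0) (P : Matrix (Fin 2) (Fin 2) ℤ)
    (h : P.transpose * !![0, t; t, 0] * P = !![0, t; t, 0]) : P * P = 1 := by
  have hSS : (!![0,1;1,0] : Matrix (Fin 2) (Fin 2) ℤ) * !![0,1;1,0] = 1 := by
    rw [Matrix.mul_fin_two, one_eta]; norm_num
  rcases (orth_classify t ht P).mp h with rfl | rfl | rfl | rfl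
  · rw [one_mul]
  · rw [neg_mul_neg, one_mul]
  · exact hSS
  · rw [neg_mul_neg]; exact hSS

lemma foldr_comp_apply {α : Type*} (L : List (α → α)) (f : α → α) (x : α) :
    L.foldr (· ∘ ·) f x = L.foldr (· ∘ ·) id (f x) := by
  induction L with
  | nil => rfl
  | cons g L ih => simp only [List.foldr_cons, Function.comp_apply, ih]

lemma quot_mk_eq (u w : ℚˣ) (r : ℚ) (hr : r ≠ 0) (h : (u:ℚ) = (w:ℚ) * r^2) :
    (QuotientGroup.mk u : ℚˣ ⧸ (powMonoidHom 2 : ℚˣ →* ℚˣ).range) = QuotientGroup.mk w := by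
  rw [QuotientGroup.eq]
  refine ⟨(Units.mk0 r hr)⁻¹, Units.ext ?_⟩
  have hw : (w:ℚ) ≠ 0 := Units.ne_zero w
  have hu : (u:ℚ) ≠ 0 := Units.ne_zero u
  simp only [powMonoidHom_apply, Units.val_pow_eq_pow_val, Units.val_mul, Units.val_inv_eq_inv_val,
    Units.val_mk0]
  rw [h]
  field_simp

lemma map_cast_mul (A B : Matrix (Fin 2) (Fin 2) ℤ) :
    ((A * B).map (Int.cast : ℤ → ℚ)) = A.map (Int.cast : ℤ → ℚ) * B.map (Int.cast : ℤ → ℚ) := by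
  have := Matrix.map_mul (M := B) (L := A) (f := Int.castRingHom ℚ)
  simpa using this



lemma image_eq (t : ℤ) (ht : t ≠ 0) :
    ({z : ℚˣ × (ℚˣ ⧸ (powMonoidHom 2 : ℚˣ →* ℚˣ).range) |
        ∃ P : Matrix (Fin 2) (Fin 2) ℤ, P.transpose * !![0, t; t, 0] * P = !![0, t; t, 0] ∧
        ∃ l : List (Fin 2 → ℚ), (∀ v ∈ l, ratForm !![0, t; t, 0] v v ≠ 0) ∧
          (∀ w, (l.map (ratReflection !![0, t; t, 0])).foldr (· ∘ ·) id w =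
            (P.map (Int.cast : ℤ → ℚ)).mulVec w) ∧
          ∃ (d u : ℚˣ), (d : ℚ) = (P.map (Int.cast : ℤ → ℚ)).det ∧
            (u : ℚ) = (l.map fun v => ratForm !![0, t; t, 0] v v).prod ∧
            z = (d, QuotientGroup.mk u)} =
      ((Subgroup.closure
      ({z | ∃ u : ℚˣ, (u : ℚ) = 2 * t ∧ z = ((-1 : ℚˣ), QuotientGroup.mk u)} ∪
       {z | ∃ u : ℚˣ, (u : ℚ) = -(2 * t) ∧ z = ((-1 : ℚˣ), QuotientGroup.mk u)}) :
       Subgroup (ℚˣ × (ℚˣ ⧸ (powMonoidHom 2 : ℚˣ →* ℚˣ).range))) :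
         Set (ℚˣ × (ℚˣ ⧸ (powMonoidHom 2 : ℚˣ →* ℚˣ).range)))) := by
  have ht' : (t : ℚ) ≠ 0 := Int.cast_ne_zero.mpr ht
  have h2t : (2 * (t:ℚ)) ≠ 0 := by positivity
  have hn2t : (-(2 * (t:ℚ))) ≠ 0 := neg_ne_zero.mpr h2t
  set U1 : ℚˣ := Units.mk0 (2 * (t:ℚ)) h2t with hU1
  set U2 : ℚˣ := Units.mk0 (-(2 * (t:ℚ))) hn2t with hU2
  have g1mem : ((-1 : ℚˣ), (QuotientGroup.mk U1 : ℚˣ ⧸ (powMonoidHom 2 : ℚˣ →* ℚˣ).range)) ∈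
      Subgroup.closure
      ({z | ∃ u : ℚˣ, (u : ℚ) = 2 * t ∧ z = ((-1 : ℚˣ), QuotientGroup.mk u)} ∪
       {z | ∃ u : ℚˣ, (u : ℚ) = -(2 * t) ∧ z = ((-1 : ℚˣ), QuotientGroup.mk u)}) :=
    Subgroup.subset_closure (Set.mem_union_left _ ⟨U1, rfl, rfl⟩)
  have g2mem : ((-1 : ℚˣ), (QuotientGroup.mk U2 : ℚˣ ⧸ (powMonoidHom 2 : ℚˣ →* ℚˣ).range)) ∈
      Subgroup.closure
      ({z | ∃ u : ℚˣ, (u : ℚ) = 2 * t ∧ z = ((-1 : ℚˣ), QuotientGroup.mk u)} ∪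
       {z | ∃ u : ℚˣ, (u : ℚ) = -(2 * t) ∧ z = ((-1 : ℚˣ), QuotientGroup.mk u)}) :=
    Subgroup.subset_closure (Set.mem_union_right _ ⟨U2, rfl, rfl⟩)
  ext z
  simp only [Set.mem_setOf_eq, SetLike.mem_coe]
  constructor
  · rintro ⟨P, hP, l, hl, hFl, d, u, hd, hu, rfl⟩
    obtain ⟨c, s, hc, hs, hprod, hF⟩ := foldr_normal_form t ht' l hl
    have key : ∀ w, (if Even l.length then ![c * w 0, c⁻¹ * w 1] else ![c * w 1, c⁻¹ * w 0]) =
        (P.map (Int.cast : ℤ → ℚ)).mulVec w := fun w => (hF w).symm.trans (hFl w)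
    rcases (orth_classify t ht P).mp hP with rfl | rfl | rfl | rfl
    · -- P = 1
      have hmap : ((1 : Matrix (Fin 2) (Fin 2) ℤ).map (Int.cast : ℤ → ℚ)) = 1 :=
        Matrix.map_one _ (by simp) (by simp)
      have hmv : ∀ w : Fin 2 → ℚ, ((1 : Matrix (Fin 2) (Fin 2) ℤ).map (Int.cast : ℤ → ℚ)).mulVec w = w := by
        intro w; rw [hmap, Matrix.one_mulVec]
      have hev : Even l.length := by
        by_contra hodd
        have k := key ![1, 0]
        rw [if_neg hodd, hmv] at k
        have := congrFun k 0
        simp at this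
      have hc1 : c = 1 := by
        have k := key ![1, 0]
        rw [if_pos hev, hmv] at k
        have := congrFun k 0
        simpa using this
      obtain ⟨m, hm⟩ := hev
      have hr : ((-(2*(t:ℚ)))^m * s) ≠ 0 := mul_ne_zero (pow_ne_zero _ hn2t) hs
      have hru : (u:ℚ) = ((1:ℚˣ):ℚ) * ((-(2*(t:ℚ)))^m * s)^2 := by
        rw [hu, hprod, hm, hc1, pow_add, Units.val_one]; ring
      have hd1 : d = 1 := by
        apply Units.ext
        rw [hd, hmap, Matrix.det_one, Units.val_one]
      rw [hd1, quot_mk_eq u 1 _ hr hru, QuotientGroup.mk_one]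
      exact Subgroup.one_mem _
    · -- P = -1
      have hmap : ((-1 : Matrix (Fin 2) (Fin 2) ℤ).map (Int.cast : ℤ → ℚ)) = !![(-1:ℚ),0;0,-1] := by
        rw [neg_one_eta, map_intCast2]; norm_num
      have hev : Even l.length := by
        by_contra hodd
        have k := key ![1, 0]
        rw [if_neg hodd, hmap, mulVec_explicit] at k
        have := congrFun k 0
        simp at this
      have hc1 : c = -1 := by
        have k := key ![1, 0]
        rw [if_pos hev, hmap, mulVec_explicit] at k
        have := congrFun k 0
        simpa using this
      obtain ⟨m, hm⟩ := hev
      have hr : ((-(2*(t:ℚ)))^m * s / (2*(t:ℚ))) ≠ 0 := div_ne_zero (mul_ne_zero (pow_ne_zero _ hn2t) hs) h2t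
      have hru : (u:ℚ) = ((U1 * U2 : ℚˣ):ℚ) * ((-(2*(t:ℚ)))^m * s / (2*(t:ℚ)))^2 := by
        rw [hu, hprod, hm, hc1, pow_add, Units.val_mul, hU1, hU2, Units.val_mk0, Units.val_mk0]
        field_simp
      have hd1 : d = 1 := by
        apply Units.ext
        rw [hd, hmap, Matrix.det_fin_two_of, Units.val_one]; norm_num
      have hz : ((d, QuotientGroup.mk u) : ℚˣ × (ℚˣ ⧸ (powMonoidHom 2 : ℚˣ →* ℚˣ).range)) =
          ((-1 : ℚˣ), QuotientGroup.mk U1) * ((-1 : ℚˣ), QuotientGroup.mk U2) := by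
        rw [Prod.mk_mul_mk, ← QuotientGroup.mk_mul, hd1, quot_mk_eq u (U1*U2) _ hr hru]
        norm_num
      rw [hz]
      exact Subgroup.mul_mem _ g1mem g2mem
    · -- P = S
      have hmap : ((!![0,1;1,0] : Matrix (Fin 2) (Fin 2) ℤ).map (Int.cast : ℤ → ℚ)) = !![(0:ℚ),1;1,0] := by
        rw [map_intCast2]; norm_num
      have hodd : ¬ Even l.length := by
        intro hev
        have k := key ![0, 1]
        rw [if_pos hev, hmap, mulVec_explicit] at k
        have := congrFun k 0
        simp at this
      have hc1 : c = 1 := by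
        have k := key ![0, 1]
        rw [if_neg hodd, hmap, mulVec_explicit] at k
        have := congrFun k 0
        simpa using this
      obtain ⟨m, hm⟩ := Nat.not_even_iff_odd.mp hodd
      have hr : ((-(2*(t:ℚ)))^m * s) ≠ 0 := mul_ne_zero (pow_ne_zero _ hn2t) hs
      have hru : (u:ℚ) = ((U2 : ℚˣ):ℚ) * ((-(2*(t:ℚ)))^m * s)^2 := by
        rw [hu, hprod, hm, hc1, show 2*m+1 = (m+m)+1 from by omega, pow_succ, pow_add, hU2, Units.val_mk0]
        ring
      have hd1 : d = -1 := by
        apply Units.ext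
        rw [hd, hmap, Matrix.det_fin_two_of]
        norm_num
      have hz : ((d, QuotientGroup.mk u) : ℚˣ × (ℚˣ ⧸ (powMonoidHom 2 : ℚˣ →* ℚˣ).range)) =
          ((-1 : ℚˣ), QuotientGroup.mk U2) := by
        rw [hd1, quot_mk_eq u U2 _ hr hru]
      rw [hz]; exact g2mem
    · -- P = -S
      have hmap : (((-(!![0,1;1,0])) : Matrix (Fin 2) (Fin 2) ℤ).map (Int.cast : ℤ → ℚ)) = !![(0:ℚ),-1;-1,0] := by
        rw [neg_S_eta, map_intCast2]; norm_num
      have hodd : ¬ Even l.length := by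
        intro hev
        have k := key ![0, 1]
        rw [if_pos hev, hmap, mulVec_explicit] at k
        have := congrFun k 0
        simp at this
      have hc1 : c = -1 := by
        have k := key ![0, 1]
        rw [if_neg hodd, hmap, mulVec_explicit] at k
        have := congrFun k 0
        simpa using this
      obtain ⟨m, hm⟩ := Nat.not_even_iff_odd.mp hodd
      have hr : ((-(2*(t:ℚ)))^m * s) ≠ 0 := mul_ne_zero (pow_ne_zero _ hn2t) hs
      have hru : (u:ℚ) = ((U1 : ℚˣ):ℚ) * ((-(2*(t:ℚ)))^m * s)^2 := by
        rw [hu, hprod, hm, hc1, show 2*m+1 = (m+m)+1 from by omega, pow_succ, pow_add, hU1, Units.val_mk0]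
        ring
      have hd1 : d = -1 := by
        apply Units.ext
        rw [hd, hmap, Matrix.det_fin_two_of]
        norm_num
      have hz : ((d, QuotientGroup.mk u) : ℚˣ × (ℚˣ ⧸ (powMonoidHom 2 : ℚˣ →* ℚˣ).range)) =
          ((-1 : ℚˣ), QuotientGroup.mk U1) := by
        rw [hd1, quot_mk_eq u U1 _ hr hru]
      rw [hz]; exact g1mem
  · intro hz
    induction hz using Subgroup.closure_induction with
    | mem x hx =>
      rcases hx with ⟨u0, hu0, rfl⟩ | ⟨u0, hu0, rfl⟩
      · -- (−1, [2t]) : use P = -S, l = [![1,1]]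
        refine ⟨-(!![0,1;1,0]), (orth_classify t ht _).mpr (Or.inr (Or.inr (Or.inr rfl))),
          [![1,1]], ?_, ?_, -1, u0, ?_, ?_, rfl⟩
        · intro v hv
          simp only [List.mem_singleton] at hv
          subst hv
          rw [ratForm_apply]
          simp
          exact ht
        · intro w
          simp only [List.map_cons, List.map_nil, List.foldr_cons, List.foldr_nil,
            Function.comp_apply, id_eq]
          exact (reflnegS_eq t ht' w).symm
        · rw [neg_S_eta, map_intCast2, Matrix.det_fin_two_of]
          norm_num
        · simp only [List.map_cons, List.map_nil, List.prod_cons, List.prod_nil, mul_one]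
          rw [ratForm_apply, hu0]
          simp
          ring
      · -- (−1, [−2t]) : use P = S, l = [![1,−1]]
        refine ⟨!![0,1;1,0], (orth_classify t ht _).mpr (Or.inr (Or.inr (Or.inl rfl))),
          [![1,-1]], ?_, ?_, -1, u0, ?_, ?_, rfl⟩
        · intro v hv
          simp only [List.mem_singleton] at hv
          subst hv
          rw [ratForm_apply]
          simp
          exact ht
        · intro w
          simp only [List.map_cons, List.map_nil, List.foldr_cons, List.foldr_nil,
            Function.comp_apply, id_eq]
          exact (reflS_eq t ht' w).symm
        · rw [map_intCast2, Matrix.det_fin_two_of]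
          norm_num
        · simp only [List.map_cons, List.map_nil, List.prod_cons, List.prod_nil, mul_one]
          rw [ratForm_apply, hu0]
          simp
          ring
    | one =>
      refine ⟨1, by simp, [], by simp, ?_, 1, 1, ?_, by simp, ?_⟩
      · intro w
        simp only [List.map_nil, List.foldr_nil, id_eq]
        rw [Matrix.map_one _ (by simp) (by simp), Matrix.one_mulVec]
      · rw [Matrix.map_one _ (by simp) (by simp), Matrix.det_one, Units.val_one]
      · rw [QuotientGroup.mk_one]
        rfl
    | mul x y hx hy ihx ihy =>
      obtain ⟨P, hP, l, hl, hFl, d, u, hd, hu, hzx⟩ := ihx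
      obtain ⟨Q, hQ, l2, hl2, hFm, e, u2, he, hu2, hzy⟩ := ihy
      refine ⟨P * Q, ?_, l ++ l2, ?_, ?_, d * e, u * u2, ?_, ?_, ?_⟩
      · rw [Matrix.transpose_mul]
        have hassoc : Qᵀ * Pᵀ * !![0,t;t,0] * (P * Q) = Qᵀ * (Pᵀ * !![0,t;t,0] * P) * Q := by
          simp only [Matrix.mul_assoc]
        rw [hassoc, hP]
        exact hQ
      · intro v hv
        rcases List.mem_append.mp hv with h | h
        · exact hl v h
        · exact hl2 v h
      · intro w
        rw [List.map_append, List.foldr_append, foldr_comp_apply, hFm w, hFl,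
          Matrix.mulVec_mulVec, ← map_cast_mul]
      · rw [Units.val_mul, hd, he, map_cast_mul, Matrix.det_mul]
      · rw [Units.val_mul, hu, hu2, List.map_append, List.prod_append]
      · rw [hzx, hzy, Prod.mk_mul_mk, QuotientGroup.mk_mul]
    | inv x hx ih =>
      obtain ⟨P, hP, l, hl, hFl, d, u, hd, hu, rfl⟩ := ih
      have detsq : ((P.map (Int.cast : ℤ → ℚ)).det) * ((P.map (Int.cast : ℤ → ℚ)).det) = 1 := by
        rcases (orth_classify t ht P).mp hP with rfl | rfl | rfl | rfl
        · rw [Matrix.map_one _ (by simp) (by simp), Matrix.det_one]; norm_num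
        · rw [neg_one_eta, map_intCast2, Matrix.det_fin_two_of]; norm_num
        · rw [map_intCast2, Matrix.det_fin_two_of]; norm_num
        · rw [neg_S_eta, map_intCast2, Matrix.det_fin_two_of]; norm_num
      have hdd : d * d = 1 := Units.ext (by rw [Units.val_mul, hd, Units.val_one]; exact detsq)
      have huu : (QuotientGroup.mk u : ℚˣ ⧸ (powMonoidHom 2 : ℚˣ →* ℚˣ).range) * QuotientGroup.mk u = 1 := by
        rw [← QuotientGroup.mk_mul, QuotientGroup.eq_one_iff]
        exact ⟨u, by rw [powMonoidHom_apply, sq]⟩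
      have hinv : ((d, QuotientGroup.mk u) : ℚˣ × (ℚˣ ⧸ (powMonoidHom 2 : ℚˣ →* ℚˣ).range))⁻¹ =
          (d, QuotientGroup.mk u) := by
        rw [Prod.inv_mk, inv_eq_of_mul_eq_one_right hdd, inv_eq_of_mul_eq_one_right huu]
      rw [hinv]
      exact ⟨P, hP, l, hl, hFl, d, u, hd, hu, rfl⟩

/-- Let `t ≠ 0` and `U(t)` the lattice with Gram matrix `[[0,t],[t,0]]`.  The
orthogonal group `O(U(t))` is `{±1, ±S}` (`S` the swap matrix), a Klein four-group
`(ℤ/2ℤ)²` generated by the reflections `T(e₁−e₂)` (= `S`) and `T(e₁+e₂)` (= `−S`);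
and the image of `O(U(t))` under `f = det × θ` is the subgroup of
`{±1} × ℚ^×/(ℚ^×)²` generated by `(−1, 2t mod squares)` and `(−1, −2t mod squares)`. -/
theorem orthogonal_group_of_Ut
    (t : ℤ) (ht : t ≠ 0) :
    letI G : Matrix (Fin 2) (Fin 2) ℤ := !![0, t; t, 0]
    letI S : Matrix (Fin 2) (Fin 2) ℤ := !![0, 1; 1, 0]
    letI sq : Subgroup ℚˣ := (powMonoidHom 2 : ℚˣ →* ℚˣ).range
    letI J : Subgroup (ℚˣ × (ℚˣ ⧸ sq)) := Subgroup.closure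
      ({z | ∃ u : ℚˣ, (u : ℚ) = 2 * t ∧ z = ((-1 : ℚˣ), QuotientGroup.mk u)} ∪
       {z | ∃ u : ℚˣ, (u : ℚ) = -(2 * t) ∧ z = ((-1 : ℚˣ), QuotientGroup.mk u)})
    ({P : Matrix (Fin 2) (Fin 2) ℤ | P.transpose * G * P = G} =
      {1, -1, S, -S}) ∧
    (∀ w : Fin 2 → ℚ,
      (S.map (Int.cast : ℤ → ℚ)).mulVec w = ratReflection G ![1, -1] w ∧
      ((-S).map (Int.cast : ℤ → ℚ)).mulVec w = ratReflection G ![1, 1] w) ∧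
    (∀ P : Matrix (Fin 2) (Fin 2) ℤ, P.transpose * G * P = G → P * P = 1) ∧
    ({z : ℚˣ × (ℚˣ ⧸ sq) |
        ∃ P : Matrix (Fin 2) (Fin 2) ℤ, P.transpose * G * P = G ∧
        ∃ l : List (Fin 2 → ℚ), (∀ v ∈ l, ratForm G v v ≠ 0) ∧
          (∀ w, (l.map (ratReflection G)).foldr (· ∘ ·) id w =
            (P.map (Int.cast : ℤ → ℚ)).mulVec w) ∧
          ∃ (d u : ℚˣ), (d : ℚ) = (P.map (Int.cast : ℤ → ℚ)).det ∧
            (u : ℚ) = (l.map fun v => ratForm G v v).prod ∧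
            z = (d, QuotientGroup.mk u)} = (J : Set (ℚˣ × (ℚˣ ⧸ sq)))) := by
  have ht' : (t : ℚ) ≠ 0 := Int.cast_ne_zero.mpr ht
  refine ⟨?_, ?_, ?_, ?_⟩
  · ext P
    simp only [Set.mem_setOf_eq, Set.mem_insert_iff, Set.mem_singleton_iff]
    exact orth_classify t ht P
  · exact fun w => ⟨reflS_eq t ht' w, reflnegS_eq t ht' w⟩
  · exact fun P => orth_sq_eq_one t ht P
  · exact image_eq t ht
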